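/- Let f : ℝ^d → ℝ be three times continuously differentiable on an open set containing the point x, and let σ² ≥ 0. On a probability space, for j = 1, 2, 3, … let Δ_j be i.i.d. uniformly distributed on {−1,1}^d and let ε_j⁺, ε_j⁻ be real random variables with mean zero and variance at most σ², such that the whole family {Δ_j, ε_j⁺, ε_j⁻ : j ≥ 1} is mutually independent. For h > 0 and ℓ ∈ ℕ, ℓ ≥ 1, define the simultaneous perturbation gradient estimator ∇̂f(x) = (1/ℓ) Σ_{j=1}^{ℓ} ((f(x+hΔ_j) + ε_j⁺ − f(x−hΔ_j) − ε_j⁻)/(2h)) Δ_j ∈ ℝ^d. Then there exist constants C > 0 and h₀ > 0 such that for every 0 < h < h₀ and every ℓ ≥ 1, E‖∇̂f(x) − E[∇̂f(x)]‖² ≤ C/(ℓ h²), where ‖·‖ is the Euclidean norm. -/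

import Mathlib

open Finset MeasureTheory ProbabilityTheory
open scoped ENNReal

lemma iIndepFun_ae_congr {Ω ι : Type*} [MeasurableSpace Ω] {μ : Measure Ω}
    {β : ι → Type*} (m : ∀ i, MeasurableSpace (β i)) {f g : ∀ i, Ω → β i}
    (hf : @iIndepFun Ω ι _ β m f μ) (h : ∀ i, f i =ᵐ[μ] g i) : @iIndepFun Ω ι _ β m g μ := by
  rw [iIndepFun_iff_measure_inter_preimage_eq_mul] at hf ⊢
  intro S sets hsets
  have h2 : ∀ i, μ (g i ⁻¹' sets i) = μ (f i ⁻¹' sets i) := by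
    intro i
    apply measure_congr
    filter_upwards [h i] with ω hω
    show (ω ∈ g i ⁻¹' sets i) = (ω ∈ f i ⁻¹' sets i)
    simp only [Set.mem_preimage, hω]
  have h3 : μ (⋂ i ∈ S, g i ⁻¹' sets i) = μ (⋂ i ∈ S, f i ⁻¹' sets i) := by
    apply measure_congr
    have hae : ∀ᵐ ω ∂μ, ∀ i ∈ S, f i ω = g i ω :=
      (MeasureTheory.ae_ball_iff S.countable_toSet).2 (fun i _ => h i)
    filter_upwards [hae] with ω hω
    show (ω ∈ ⋂ i ∈ S, g i ⁻¹' sets i) = (ω ∈ ⋂ i ∈ S, f i ⁻¹' sets i)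
    simp only [Set.mem_iInter, Set.mem_preimage, eq_iff_iff]
    constructor
    · intro H i hi; rw [hω i hi]; exact H i hi
    · intro H i hi; rw [← hω i hi]; exact H i hi
  rw [h3, hf S hsets]
  exact (Finset.prod_congr rfl (fun i _ => (h2 i).symm))

/-- The sign vector in `ℝ^d` associated with a Boolean vector: `1` where `true`, `-1` where
`false`. Ranging over all `s : Fin d → Bool` ranges over all sign vectors `Δ ∈ {-1,1}^d`. -/
noncomputable def signVec (d : ℕ) (s : Fin d → Bool) : EuclideanSpace ℝ (Fin d) :=
  WithLp.toLp 2 (fun k => if s k then 1 else -1)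

/-- Index-dependent codomain for the joint family `(Δ_j, ε_j⁺, ε_j⁻)_j`: perturbation vectors
(encoded as Boolean vectors) on the first summand, real noises on the other two. -/
abbrev SPFam (d : ℕ) : ℕ ⊕ ℕ ⊕ ℕ → Type :=
  Sum.elim (fun _ => Fin d → Bool) (Sum.elim (fun _ => ℝ) (fun _ => ℝ))

/-- The canonical measurable-space structure on each codomain of `SPFam`. -/
def spFamMS (d : ℕ) : ∀ i : ℕ ⊕ ℕ ⊕ ℕ, MeasurableSpace (SPFam d i)
  | Sum.inl _ => (inferInstance : MeasurableSpace (Fin d → Bool))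
  | Sum.inr (Sum.inl _) => (inferInstance : MeasurableSpace ℝ)
  | Sum.inr (Sum.inr _) => (inferInstance : MeasurableSpace ℝ)

/-- The whole family `{Δ_j, ε_j⁺, ε_j⁻ : j}` viewed as a single indexed family of random
variables, used to state its mutual independence. -/
def spFam {Ω : Type*} (d : ℕ) (Δ : ℕ → Ω → (Fin d → Bool)) (εp εm : ℕ → Ω → ℝ) :
    ∀ i : ℕ ⊕ ℕ ⊕ ℕ, Ω → SPFam d i
  | Sum.inl j => Δ j
  | Sum.inr (Sum.inl j) => εp j
  | Sum.inr (Sum.inr j) => εm j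

lemma euclid_sum_apply {d : ℕ} {ι : Type*} (s : Finset ι) (v : ι → EuclideanSpace ℝ (Fin d))
    (k : Fin d) : (∑ j ∈ s, v j) k = ∑ j ∈ s, v j k := by
  exact map_sum (EuclideanSpace.proj (𝕜 := ℝ) k) v s

lemma signVec_abs {d : ℕ} (s : Fin d → Bool) (k : Fin d) : |signVec d s k| = 1 := by
  by_cases h : s k <;> simp [signVec, h]

lemma signVec_sq {d : ℕ} (s : Fin d → Bool) (k : Fin d) : (signVec d s k) ^ 2 = 1 := by
  by_cases h : s k <;> simp [signVec, h]

lemma signVec_norm {d : ℕ} (s : Fin d → Bool) : ‖signVec d s‖ = Real.sqrt d := by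
  have hk : ∀ k : Fin d, ‖signVec d s k‖ ^ 2 = 1 := fun k => by
    rw [Real.norm_eq_abs, signVec_abs]; norm_num
  rw [EuclideanSpace.norm_eq]
  simp [signVec_sq]

set_option maxHeartbeats 1000000 in
/-- Variance part of Theorem 1: the simultaneous perturbation gradient estimator built from
`ℓ` independent perturbation pairs with scaling parameter `h` has variance
`E‖∇̂f(x) - E ∇̂f(x)‖² ≤ C/(ℓ h²)` for all `0 < h < h₀` and all `ℓ ≥ 1`. -/
theorem simultaneous_perturbation_variance
    {Ω : Type*} [MeasurableSpace Ω] (μ : Measure Ω) [IsProbabilityMeasure μ]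
    (d : ℕ) (f : EuclideanSpace ℝ (Fin d) → ℝ)
    (x : EuclideanSpace ℝ (Fin d)) (U : Set (EuclideanSpace ℝ (Fin d)))
    (hU : IsOpen U) (hxU : x ∈ U) (hf : ContDiffOn ℝ 3 f U)
    (σ2 : ℝ) (hσ2 : 0 ≤ σ2)
    (Δ : ℕ → Ω → (Fin d → Bool)) (εp εm : ℕ → Ω → ℝ)
    (hΔmeas : ∀ j, Measurable (Δ j))
    (hΔunif : ∀ j, ∀ s : Fin d → Bool, μ {ω | Δ j ω = s} = ((2 : ℝ≥0∞) ^ d)⁻¹)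
    (hεpL2 : ∀ j, MemLp (εp j) 2 μ) (hεmL2 : ∀ j, MemLp (εm j) 2 μ)
    (hεpMean : ∀ j, ∫ ω, εp j ω ∂μ = 0) (hεmMean : ∀ j, ∫ ω, εm j ω ∂μ = 0)
    (hεpVar : ∀ j, variance (εp j) μ ≤ σ2) (hεmVar : ∀ j, variance (εm j) μ ≤ σ2)
    (hIndep : @iIndepFun Ω (ℕ ⊕ ℕ ⊕ ℕ) _ (SPFam d) (spFamMS d) (spFam d Δ εp εm) μ)
    (est : ℝ → ℕ → Ω → EuclideanSpace ℝ (Fin d))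
    (hest : ∀ h : ℝ, ∀ ℓ : ℕ, ∀ ω : Ω,
      est h ℓ ω = (ℓ : ℝ)⁻¹ • ∑ j ∈ Finset.Icc 1 ℓ,
        ((f (x + h • signVec d (Δ j ω)) + εp j ω
            - f (x - h • signVec d (Δ j ω)) - εm j ω) / (2 * h)) • signVec d (Δ j ω)) :
    ∃ C > (0 : ℝ), ∃ h₀ > (0 : ℝ), ∀ h : ℝ, 0 < h → h < h₀ → ∀ ℓ : ℕ, 1 ≤ ℓ →
      ∫ ω, ‖est h ℓ ω - ∫ ω', est h ℓ ω' ∂μ‖ ^ 2 ∂μ ≤ C / (ℓ * h ^ 2) := by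
  classical
  -- a closed ball around x inside U, and a bound for f on it
  obtain ⟨r, hr, hball⟩ : ∃ r > (0:ℝ), Metric.closedBall x r ⊆ U := by
    obtain ⟨r, hr, hsub⟩ := Metric.isOpen_iff.mp hU x hxU
    exact ⟨r/2, by positivity, fun y hy =>
      hsub (lt_of_le_of_lt (Metric.mem_closedBall.mp hy) (by linarith))⟩
  obtain ⟨M, hM⟩ := (isCompact_closedBall x r).exists_bound_of_continuousOn
    ((hf.continuousOn).mono hball)
  set M' : ℝ := max M 0 with hM'def
  have hM' : ∀ y ∈ Metric.closedBall x r, |f y| ≤ M' := by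
    intro y hy
    rw [← Real.norm_eq_abs]
    exact (hM y hy).trans (le_max_left _ _)
  have hM'0 : (0:ℝ) ≤ M' := le_max_right _ _
  set K : ℝ := 3 * (4 * M' ^ 2 + 2 * σ2) with hKdef
  have hK0 : (0:ℝ) ≤ K := by positivity
  have hsd : (0:ℝ) < Real.sqrt d + 1 := by positivity
  refine ⟨(d:ℝ) * K + 1, by positivity, r / (Real.sqrt d + 1), by positivity, ?_⟩
  intro h hh0 hh ℓ hℓ
  have hℓ0 : (0:ℝ) < (ℓ:ℝ) := by exact_mod_cast hℓ
  -- points x ± h • signVec lie in the ball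
  have hmem : ∀ s : Fin d → Bool, h * Real.sqrt d ≤ r := by
    intro s
    have h1 : h * (Real.sqrt d + 1) < r := by
      rw [lt_div_iff₀ hsd] at hh; exact hh
    nlinarith [Real.sqrt_nonneg (d:ℝ)]
  have hFpb : ∀ (s : Fin d → Bool), |f (x + h • signVec d s)| ≤ M' := by
    intro s
    apply hM'
    rw [Metric.mem_closedBall, dist_self_add_left, norm_smul, Real.norm_eq_abs,
      abs_of_pos hh0, signVec_norm]
    exact hmem s
  have hFmb : ∀ (s : Fin d → Bool), |f (x - h • signVec d s)| ≤ M' := by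
    intro s
    apply hM'
    rw [Metric.mem_closedBall, dist_self_sub_left, norm_smul, Real.norm_eq_abs,
      abs_of_pos hh0, signVec_norm]
    exact hmem s
  -- measurable modifications of the noises
  set εp' : ℕ → Ω → ℝ := fun j => (hεpL2 j).1.mk (εp j) with hεp'def
  set εm' : ℕ → Ω → ℝ := fun j => (hεmL2 j).1.mk (εm j) with hεm'def
  have hεp'meas : ∀ j, Measurable (εp' j) := fun j => (hεpL2 j).1.measurable_mk
  have hεm'meas : ∀ j, Measurable (εm' j) := fun j => (hεmL2 j).1.measurable_mk
  have heqp : ∀ j, εp j =ᵐ[μ] εp' j := fun j => (hεpL2 j).1.ae_eq_mk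
  have heqm : ∀ j, εm j =ᵐ[μ] εm' j := fun j => (hεmL2 j).1.ae_eq_mk
  have hεp'L2 : ∀ j, MemLp (εp' j) 2 μ := fun j => (hεpL2 j).ae_eq (heqp j)
  have hεm'L2 : ∀ j, MemLp (εm' j) 2 μ := fun j => (hεmL2 j).ae_eq (heqm j)
  -- second moments of noises
  have hεp'sq : ∀ j, ∫ ω, (εp' j ω) ^ 2 ∂μ ≤ σ2 := by
    intro j
    have h1 : ∫ ω, (εp' j ω) ^ 2 ∂μ = ∫ ω, (εp j ω) ^ 2 ∂μ := by
      apply integral_congr_ae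
      filter_upwards [heqp j] with ω hω
      rw [hω]
    have h2 := variance_eq_sub (hεpL2 j)
    rw [hεpMean j] at h2
    have h3 : ∫ ω, (εp j ω) ^ 2 ∂μ = variance (εp j) μ := by
      rw [h2]; simp [Pi.pow_apply]
    rw [h1, h3]
    exact hεpVar j
  have hεm'sq : ∀ j, ∫ ω, (εm' j ω) ^ 2 ∂μ ≤ σ2 := by
    intro j
    have h1 : ∫ ω, (εm' j ω) ^ 2 ∂μ = ∫ ω, (εm j ω) ^ 2 ∂μ := by
      apply integral_congr_ae
      filter_upwards [heqm j] with ω hω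
      rw [hω]
    have h2 := variance_eq_sub (hεmL2 j)
    rw [hεmMean j] at h2
    have h3 : ∫ ω, (εm j ω) ^ 2 ∂μ = variance (εm j) μ := by
      rw [h2]; simp [Pi.pow_apply]
    rw [h1, h3]
    exact hεmVar j
  -- independence of the modified family
  have hIndep' : @iIndepFun Ω (ℕ ⊕ ℕ ⊕ ℕ) _ (SPFam d) (spFamMS d) (spFam d Δ εp' εm') μ := by
    apply iIndepFun_ae_congr _ hIndep
    rintro (j | j | j)
    · exact Filter.EventuallyEq.rfl
    · exact heqp j
    · exact heqm j
  have hmeas' : ∀ i, @Measurable Ω (SPFam d i) _ (spFamMS d i) (spFam d Δ εp' εm' i) := by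
    rintro (j | j | j)
    · exact hΔmeas j
    · exact hεp'meas j
    · exact hεm'meas j
  -- the basic scalar random variables
  set N : ℕ → Ω → ℝ := fun j ω =>
    f (x + h • signVec d (Δ j ω)) + εp' j ω - f (x - h • signVec d (Δ j ω)) - εm' j ω with hNdef
  set Y : Fin d → ℕ → Ω → ℝ := fun k j ω =>
    (signVec d (Δ j ω) k / (2 * h)) * N j ω with hYdef
  have hFpmeas : ∀ j, Measurable (fun ω => f (x + h • signVec d (Δ j ω))) := fun j =>
    (measurable_of_countable (fun s => f (x + h • signVec d s))).comp (hΔmeas j)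
  have hFmmeas : ∀ j, Measurable (fun ω => f (x - h • signVec d (Δ j ω))) := fun j =>
    (measurable_of_countable (fun s => f (x - h • signVec d s))).comp (hΔmeas j)
  have hsmeas : ∀ (k : Fin d) j, Measurable (fun ω => signVec d (Δ j ω) k) := fun k j =>
    (measurable_of_countable (fun s => signVec d s k)).comp (hΔmeas j)
  have hNmeas : ∀ j, Measurable (N j) :=
    fun j => (((hFpmeas j).add (hεp'meas j)).sub (hFmmeas j)).sub (hεm'meas j)
  have hYmeas : ∀ (k : Fin d) j, Measurable (Y k j) :=
    fun k j => ((hsmeas k j).div_const _).mul (hNmeas j)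
  -- L² bounds
  have hFpL2 : ∀ j, MemLp (fun ω => f (x + h • signVec d (Δ j ω))) 2 μ := fun j =>
    MemLp.of_bound (hFpmeas j).aestronglyMeasurable M'
      (Filter.Eventually.of_forall fun ω => by
        rw [Real.norm_eq_abs]; exact hFpb (Δ j ω))
  have hFmL2 : ∀ j, MemLp (fun ω => f (x - h • signVec d (Δ j ω))) 2 μ := fun j =>
    MemLp.of_bound (hFmmeas j).aestronglyMeasurable M'
      (Filter.Eventually.of_forall fun ω => by
        rw [Real.norm_eq_abs]; exact hFmb (Δ j ω))
  have hNL2 : ∀ j, MemLp (N j) 2 μ :=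
    fun j => (((hFpL2 j).add (hεp'L2 j)).sub (hFmL2 j)).sub (hεm'L2 j)
  have hYL2 : ∀ (k : Fin d) j, MemLp (Y k j) 2 μ := by
    intro k j
    have hφ : MemLp (fun ω => signVec d (Δ j ω) k / (2 * h)) ∞ μ :=
      memLp_top_of_bound ((hsmeas k j).div_const _).aestronglyMeasurable (1 / (2 * h))
        (Filter.Eventually.of_forall fun ω => by
          rw [Real.norm_eq_abs, abs_div, signVec_abs, abs_of_pos (by linarith : (0:ℝ) < 2 * h)])
    exact MemLp.smul (hNL2 j) hφ
  -- pairwise independence of the Y's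
  have hYindep : ∀ k : Fin d, ∀ i j : ℕ, i ≠ j → IndepFun (Y k i) (Y k j) μ := by
    intro k i j hij
    set T : ℕ → Finset (ℕ ⊕ ℕ ⊕ ℕ) := fun n =>
      {Sum.inl n, Sum.inr (Sum.inl n), Sum.inr (Sum.inr n)} with hTdef
    have hmemT1 : ∀ n, Sum.inl n ∈ T n := by intro n; simp [hTdef]
    have hmemT2 : ∀ n, Sum.inr (Sum.inl n) ∈ T n := by intro n; simp [hTdef]
    have hmemT3 : ∀ n, Sum.inr (Sum.inr n) ∈ T n := by intro n; simp [hTdef]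
    have hdisj : Disjoint (T i) (T j) := by
      rw [Finset.disjoint_left]
      intro a hai haj
      simp only [hTdef, Finset.mem_insert, Finset.mem_singleton] at hai haj
      rcases hai with rfl | rfl | rfl <;> rcases haj with h' | h' | h' <;>
        first
          | exact hij (by simpa using h')
          | simpa using h'
    have base := hIndep'.indepFun_finset (T i) (T j) hdisj hmeas'
    have hψmeas : ∀ n, @Measurable _ ℝ
        (MeasurableSpace.pi (m := fun a : (T n : Finset (ℕ ⊕ ℕ ⊕ ℕ)) => spFamMS d a)) _
        (fun p : (∀ a : (T n : Finset (ℕ ⊕ ℕ ⊕ ℕ)), SPFam d a) =>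
          (signVec d (p ⟨Sum.inl n, hmemT1 n⟩) k / (2 * h)) *
            (f (x + h • signVec d (p ⟨Sum.inl n, hmemT1 n⟩))
              + (show ℝ from p ⟨Sum.inr (Sum.inl n), hmemT2 n⟩)
              - f (x - h • signVec d (p ⟨Sum.inl n, hmemT1 n⟩))
              - (show ℝ from p ⟨Sum.inr (Sum.inr n), hmemT3 n⟩))) := by
      intro n
      letI : ∀ a : (T n : Finset (ℕ ⊕ ℕ ⊕ ℕ)), MeasurableSpace (SPFam d a) :=
        fun a => spFamMS d a
      have e1 : Measurable (fun p : (∀ a : (T n : Finset (ℕ ⊕ ℕ ⊕ ℕ)), SPFam d a) =>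
          p ⟨Sum.inl n, hmemT1 n⟩) := measurable_pi_apply _
      have e2 : Measurable (fun p : (∀ a : (T n : Finset (ℕ ⊕ ℕ ⊕ ℕ)), SPFam d a) =>
          (show ℝ from p ⟨Sum.inr (Sum.inl n), hmemT2 n⟩)) := measurable_pi_apply _
      have e3 : Measurable (fun p : (∀ a : (T n : Finset (ℕ ⊕ ℕ ⊕ ℕ)), SPFam d a) =>
          (show ℝ from p ⟨Sum.inr (Sum.inr n), hmemT3 n⟩)) := measurable_pi_apply _
      have m1 : Measurable (fun p : (∀ a : (T n : Finset (ℕ ⊕ ℕ ⊕ ℕ)), SPFam d a) =>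
          signVec d (p ⟨Sum.inl n, hmemT1 n⟩) k / (2 * h)) :=
        (measurable_of_countable (fun s : Fin d → Bool => signVec d s k / (2 * h))).comp e1
      have m2 : Measurable (fun p : (∀ a : (T n : Finset (ℕ ⊕ ℕ ⊕ ℕ)), SPFam d a) =>
          f (x + h • signVec d (p ⟨Sum.inl n, hmemT1 n⟩))) :=
        (measurable_of_countable (fun s : Fin d → Bool => f (x + h • signVec d s))).comp e1
      have m3 : Measurable (fun p : (∀ a : (T n : Finset (ℕ ⊕ ℕ ⊕ ℕ)), SPFam d a) =>
          f (x - h • signVec d (p ⟨Sum.inl n, hmemT1 n⟩))) :=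
        (measurable_of_countable (fun s : Fin d → Bool => f (x - h • signVec d s))).comp e1
      exact m1.mul (((m2.add e2).sub m3).sub e3)
    have hcomp := base.comp (hψmeas i) (hψmeas j)
    rw [hYdef]
    simp only [hNdef]
    exact hcomp
  have h2h : (0:ℝ) < 2 * h := by linarith
  -- second moment bound for the Y's
  have hYsq : ∀ (k : Fin d) (j : ℕ), ∫ ω, (Y k j ω) ^ 2 ∂μ ≤ K / h ^ 2 := by
    intro k j
    have hpt : ∀ ω, (Y k j ω) ^ 2 ≤
        (12 * M' ^ 2 + 3 * (εp' j ω) ^ 2 + 3 * (εm' j ω) ^ 2) / (4 * h ^ 2) := by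
      intro ω
      have hs := signVec_sq (Δ j ω) k
      have hp' := abs_le.mp (hFpb (Δ j ω))
      have hm' := abs_le.mp (hFmb (Δ j ω))
      have hA : (f (x + h • signVec d (Δ j ω)) - f (x - h • signVec d (Δ j ω))) ^ 2
          ≤ 4 * M' ^ 2 := by nlinarith [hp'.1, hp'.2, hm'.1, hm'.2]
      have hNb : (N j ω) ^ 2 ≤ 12 * M' ^ 2 + 3 * (εp' j ω) ^ 2 + 3 * (εm' j ω) ^ 2 := by
        simp only [hNdef]
        nlinarith [hA, sq_nonneg (f (x + h • signVec d (Δ j ω))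
            - f (x - h • signVec d (Δ j ω)) - εp' j ω),
          sq_nonneg (f (x + h • signVec d (Δ j ω))
            - f (x - h • signVec d (Δ j ω)) + εm' j ω),
          sq_nonneg (εp' j ω + εm' j ω)]
      have hY2 : (Y k j ω) ^ 2 = (N j ω) ^ 2 / (4 * h ^ 2) := by
        simp only [hYdef]
        rw [mul_pow, div_pow, hs]
        ring
      rw [hY2]
      gcongr
    have hint1 : Integrable (fun ω => (Y k j ω) ^ 2) μ := (hYL2 k j).integrable_sq
    have hint2 : Integrable
        (fun ω => (12 * M' ^ 2 + 3 * (εp' j ω) ^ 2 + 3 * (εm' j ω) ^ 2) / (4 * h ^ 2)) μ := by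
      apply Integrable.div_const
      exact ((integrable_const _).add ((hεp'L2 j).integrable_sq.const_mul 3)).add
        ((hεm'L2 j).integrable_sq.const_mul 3)
    calc ∫ ω, (Y k j ω) ^ 2 ∂μ
        ≤ ∫ ω, (12 * M' ^ 2 + 3 * (εp' j ω) ^ 2 + 3 * (εm' j ω) ^ 2) / (4 * h ^ 2) ∂μ :=
          integral_mono hint1 hint2 hpt
      _ = (12 * M' ^ 2 + 3 * (∫ ω, (εp' j ω) ^ 2 ∂μ) + 3 * (∫ ω, (εm' j ω) ^ 2 ∂μ))
            / (4 * h ^ 2) := by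
          rw [integral_div, integral_add, integral_add, integral_const, integral_const_mul,
            integral_const_mul]
          · simp
          · exact integrable_const _
          · exact (hεp'L2 j).integrable_sq.const_mul 3
          · exact (integrable_const _).add ((hεp'L2 j).integrable_sq.const_mul 3)
          · exact (hεm'L2 j).integrable_sq.const_mul 3
      _ ≤ (12 * M' ^ 2 + 3 * σ2 + 3 * σ2) / (4 * h ^ 2) := by
          gcongr
          · exact hεp'sq j
          · exact hεm'sq j
      _ ≤ K / h ^ 2 := by
          rw [hKdef, div_le_div_iff₀ (by positivity) (by positivity)]
          nlinarith [sq_nonneg h, hM'0, hσ2, sq_nonneg M']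
  -- the averaged estimator with modified noises and its coordinates
  set est' : Ω → EuclideanSpace ℝ (Fin d) := fun ω =>
    (ℓ : ℝ)⁻¹ • ∑ j ∈ Finset.Icc 1 ℓ, (N j ω / (2 * h)) • signVec d (Δ j ω) with hest'def
  set X : Fin d → Ω → ℝ := fun k ω => (ℓ : ℝ)⁻¹ * ∑ j ∈ Finset.Icc 1 ℓ, Y k j ω with hXdef
  have hcoord : ∀ ω k, est' ω k = X k ω := by
    intro ω k
    simp only [hest'def, hXdef, PiLp.smul_apply, smul_eq_mul]
    congr 1
    rw [euclid_sum_apply]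
    apply Finset.sum_congr rfl
    intro j _
    simp only [hYdef, PiLp.smul_apply, smul_eq_mul]
    ring
  have h_ae : est h ℓ =ᵐ[μ] est' := by
    have hall : ∀ᵐ ω ∂μ, ∀ j : ℕ, εp j ω = εp' j ω ∧ εm j ω = εm' j ω :=
      ae_all_iff.2 fun j => ((heqp j).and (heqm j))
    filter_upwards [hall] with ω hω
    rw [hest h ℓ ω]
    simp only [hest'def]
    congr 1
    apply Finset.sum_congr rfl
    intro j _
    simp only [hNdef]
    rw [(hω j).1, (hω j).2]
  have hterm_int : ∀ j, Integrable (fun ω => (N j ω / (2 * h)) • signVec d (Δ j ω)) μ := by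
    intro j
    have hv : MemLp (fun ω => signVec d (Δ j ω)) ∞ μ :=
      memLp_top_of_bound ((measurable_of_countable (signVec d)).comp
        (hΔmeas j)).aestronglyMeasurable (Real.sqrt d)
        (Filter.Eventually.of_forall fun ω => by rw [signVec_norm])
    have hc : MemLp (fun ω => N j ω / (2 * h)) 1 μ := by
      have := ((hNL2 j).mono_exponent (p := 1) (by norm_num))
      simpa [div_eq_inv_mul] using this.const_mul (2 * h)⁻¹
    exact memLp_one_iff_integrable.mp (MemLp.smul hv hc)
  have hest'int : Integrable est' μ := by
    rw [hest'def]
    exact (integrable_finset_sum _ (fun j _ => hterm_int j)).smul ((ℓ:ℝ)⁻¹)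
  have hmk : ∀ k, (∫ ω, est' ω ∂μ) k = ∫ ω, X k ω ∂μ := by
    intro k
    have h1 : (∫ ω, est' ω ∂μ) k = (EuclideanSpace.proj (𝕜 := ℝ) k) (∫ ω, est' ω ∂μ) := rfl
    rw [h1, ← ContinuousLinearMap.integral_comp_comm _ hest'int]
    apply integral_congr_ae
    exact Filter.Eventually.of_forall fun ω => by
      simpa using (hcoord ω k)
  have hXL2 : ∀ k, MemLp (X k) 2 μ := by
    intro k
    have hsum : MemLp (fun ω => ∑ j ∈ Finset.Icc 1 ℓ, Y k j ω) 2 μ := by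
      have h1 := memLp_finset_sum' (Finset.Icc 1 ℓ) (fun j (_ : j ∈ Finset.Icc 1 ℓ) => hYL2 k j)
      exact h1.ae_eq (Filter.Eventually.of_forall fun ω => (Finset.sum_apply ω _ _))
    exact hsum.const_mul _
  have hnorm : ∀ v : EuclideanSpace ℝ (Fin d), ‖v‖ ^ 2 = ∑ k, (v k) ^ 2 := by
    intro v
    rw [EuclideanSpace.norm_eq, Real.sq_sqrt (Finset.sum_nonneg fun k _ => sq_nonneg _)]
    apply Finset.sum_congr rfl
    intro k _
    rw [Real.norm_eq_abs, sq_abs]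
  have hXvar : ∀ k, variance (X k) μ ≤ K / (ℓ * h ^ 2) := by
    intro k
    have hfun : X k = fun ω => (ℓ : ℝ)⁻¹ * (fun ω' => ∑ j ∈ Finset.Icc 1 ℓ, Y k j ω') ω := by
      rw [hXdef]
    have hvar1 : variance (X k) μ
        = ((ℓ : ℝ)⁻¹) ^ 2 * variance (fun ω => ∑ j ∈ Finset.Icc 1 ℓ, Y k j ω) μ := by
      rw [hfun]
      exact variance_const_mul _ _ μ
    have heqsum : (fun ω => ∑ j ∈ Finset.Icc 1 ℓ, Y k j ω) = ∑ j ∈ Finset.Icc 1 ℓ, Y k j := by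
      funext ω
      exact (Finset.sum_apply ω _ _).symm
    have hps : Set.Pairwise ↑(Finset.Icc 1 ℓ) (fun i j => IndepFun (Y k i) (Y k j) μ) :=
      fun i _ j _ hij => hYindep k i j hij
    have hvar2 : variance (fun ω => ∑ j ∈ Finset.Icc 1 ℓ, Y k j ω) μ
        = ∑ j ∈ Finset.Icc 1 ℓ, variance (Y k j) μ := by
      rw [heqsum]
      exact IndepFun.variance_sum (fun j _ => hYL2 k j) hps
    have hvar3 : ∀ j ∈ Finset.Icc 1 ℓ, variance (Y k j) μ ≤ K / h ^ 2 := by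
      intro j _
      refine (variance_le_expectation_sq (hYmeas k j).aestronglyMeasurable).trans ?_
      simpa [Pi.pow_apply] using hYsq k j
    calc variance (X k) μ
        = ((ℓ : ℝ)⁻¹) ^ 2 * ∑ j ∈ Finset.Icc 1 ℓ, variance (Y k j) μ := by rw [hvar1, hvar2]
      _ ≤ ((ℓ : ℝ)⁻¹) ^ 2 * ((ℓ : ℝ) * (K / h ^ 2)) := by
          apply mul_le_mul_of_nonneg_left _ (by positivity)
          have := Finset.sum_le_card_nsmul (Finset.Icc 1 ℓ) _ (K / h ^ 2) hvar3
          rw [Nat.card_Icc] at this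
          simpa [nsmul_eq_mul] using this
      _ = K / (ℓ * h ^ 2) := by
          field_simp
  -- put everything together
  have hmm : ∫ ω', est h ℓ ω' ∂μ = ∫ ω', est' ω' ∂μ := integral_congr_ae h_ae
  calc ∫ ω, ‖est h ℓ ω - ∫ ω', est h ℓ ω' ∂μ‖ ^ 2 ∂μ
      = ∫ ω, ‖est' ω - ∫ ω', est' ω' ∂μ‖ ^ 2 ∂μ := by
        apply integral_congr_ae
        filter_upwards [h_ae] with ω hω
        rw [hω, hmm]
    _ = ∫ ω, ∑ k, (X k ω - ∫ ω', X k ω' ∂μ) ^ 2 ∂μ := by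
        apply integral_congr_ae
        apply Filter.Eventually.of_forall
        intro ω
        show ‖est' ω - ∫ ω', est' ω' ∂μ‖ ^ 2 = ∑ k, (X k ω - ∫ ω', X k ω' ∂μ) ^ 2
        rw [hnorm]
        apply Finset.sum_congr rfl
        intro k _
        rw [PiLp.sub_apply, hcoord, hmk]
    _ = ∑ k, ∫ ω, (X k ω - ∫ ω', X k ω' ∂μ) ^ 2 ∂μ :=
        integral_finset_sum _ (fun k _ =>
          (((hXL2 k).sub (memLp_const (∫ ω', X k ω' ∂μ))).integrable_sq).congr
            (Filter.Eventually.of_forall fun ω => by simp))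
    _ = ∑ k, variance (X k) μ := by
        apply Finset.sum_congr rfl
        intro k _
        rw [show variance (X k) μ = ∫ ω, ((X k - fun _ => ∫ ω', X k ω' ∂μ) ^ 2 : Ω → ℝ) ω ∂μ from
          variance_eq_integral (hXL2 k).aemeasurable]
        apply integral_congr_ae
        apply Filter.Eventually.of_forall
        intro ω
        simp [Pi.pow_apply]
    _ ≤ ∑ _k : Fin d, K / (ℓ * h ^ 2) := Finset.sum_le_sum (fun k _ => hXvar k)
    _ = (d : ℝ) * K / (ℓ * h ^ 2) := by
        rw [Finset.sum_const, Finset.card_univ, Fintype.card_fin, nsmul_eq_mul]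
        ring
    _ ≤ ((d : ℝ) * K + 1) / (ℓ * h ^ 2) := by
        gcongr
        linarith
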